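/- Let A be a deterministic finite word automaton with state set Q reading paths from tree nodes toward the root of a finite tree t. For each node x in a set X, let r_x be the run of A on the label sequence of the upward path starting at x and ending at some designated node f(x) ≥root-side (an ancestor-path target). If two runs r_x and r_{x'} assign the same state of A to a common node z of t, then from z onward the runs coincide, and in particular x and x' can be directed to the same target via a shared guide. Consequently, there is a guidance system with at most |Q| colors inducing a function that maps each x ∈ X to some valid target node, where validity of a target y for x means the run of A on the path from x to y is accepting. -/

import Mathlib

/-! Binary-tree nodes are lists of booleans (root-to-node paths); the ancestor
relation is list-prefix `<+:`. -/

/-- Longest common prefix = greatest common ancestor. -/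
def lcp : List Bool → List Bool → List Bool
  | a :: as, b :: bs => if a = b then a :: lcp as bs else []
  | _, _ => []

/-- `w` lies on the path between `u` and `v`. -/
def onPath (u v w : List Bool) : Prop :=
  lcp u v <+: w ∧ (w <+: u ∨ w <+: v)

/-- A guide: a nonempty set of sources and one target. -/
structure BGuide where
  sources : Set (List Bool)
  nonempty : sources.Nonempty
  target : List Bool

/-- The support of a guide. -/
def BGuide.support (π : BGuide) : Set (List Bool) :=
  {w | ∃ s ∈ π.sources, onPath s π.target w}

/-- Two guides conflict if their supports intersect. -/
def BConflict (π π' : BGuide) : Prop := (π.support ∩ π'.support).Nonempty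

/-- A deterministic finite automaton with state set `Fin k`. -/
structure DFA' (A : Type*) where
  k : ℕ
  δ : Fin k → A → Fin k
  q0 : Fin k
  F : Set (Fin k)

/-- Word of labels on the upward path from node `x` to its ancestor `z`
(inclusive), read from `x` towards the root. -/
def upWord {A : Type*} (ℓ : List Bool → A) (x z : List Bool) : List A :=
  (List.range (x.length - z.length + 1)).map fun i => ℓ (x.take (x.length - i))

/-- The state of the run of `M` started in `q0` at `x`, after reading the
upward path from `x` to `z`. -/
def stateAt {A : Type*} (M : DFA' A) (ℓ : List Bool → A) (x z : List Bool) : Fin M.k :=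
  (upWord ℓ x z).foldl M.δ M.q0

/-- `y` is a valid target for `x`: `y` is an ancestor of `x` and the run of
`M` on the upward path from `x` to `y` is accepting. -/
def ValidTarget {A : Type*} (M : DFA' A) (ℓ : List Bool → A) (x y : List Bool) : Prop :=
  y <+: x ∧ stateAt M ℓ x y ∈ M.F

section Aux
attribute [local instance] Classical.propDecidable
variable {A : Type*} (M : DFA' A) (ℓ : List Bool → A)

lemma lcp_of_prefix : ∀ {y x : List Bool}, y <+: x → lcp x y = y := by
  intro y
  induction y with
  | nil => intro x _; cases x <;> rfl
  | cons b bs ih =>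
    intro x h
    obtain ⟨t, rfl⟩ := h
    show lcp (b :: (bs ++ t)) (b :: bs) = b :: bs
    simp [lcp, ih ⟨t, rfl⟩]

lemma take_eq_of_prefix {z x : List Bool} (h : z <+: x) {n : ℕ} (hn : n ≤ z.length) :
    x.take n = z.take n := by
  obtain ⟨t, rfl⟩ := h
  rw [List.take_append_of_le_length hn]

def midWord (z w : List Bool) : List A :=
  (List.range (z.length - w.length)).map fun j => ℓ (z.take (z.length - 1 - j))

lemma upWord_decomp {w z x : List Bool} (hwz : w <+: z) (hzx : z <+: x) :
    upWord ℓ x w = upWord ℓ x z ++ midWord ℓ z w := by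
  have h1 : w.length ≤ z.length := hwz.length_le
  have h2 : z.length ≤ x.length := hzx.length_le
  unfold upWord midWord
  rw [show x.length - w.length + 1 = (x.length - z.length + 1) + (z.length - w.length) by omega,
    List.range_add, List.map_append, List.map_map]
  congr 1
  apply List.map_congr_left
  intro j hj
  simp only [List.mem_range] at hj
  simp only [Function.comp_apply]
  rw [show x.length - (x.length - z.length + 1 + j) = z.length - 1 - j by omega,
    take_eq_of_prefix hzx (by omega)]

lemma stateAt_decomp {w z x : List Bool} (hwz : w <+: z) (hzx : z <+: x) :
    stateAt M ℓ x w = (midWord ℓ z w).foldl M.δ (stateAt M ℓ x z) := by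
  unfold stateAt
  rw [upWord_decomp ℓ hwz hzx, List.foldl_append]

lemma stateAt_agree {x x' z w : List Bool} (hzx : z <+: x) (hzx' : z <+: x')
    (h : stateAt M ℓ x z = stateAt M ℓ x' z) (hw : w <+: z) :
    stateAt M ℓ x w = stateAt M ℓ x' w := by
  rw [stateAt_decomp M ℓ hw hzx, stateAt_decomp M ℓ hw hzx', h]

noncomputable def wfT (x : List Bool) : List Bool :=
  if h : ∃ m, ValidTarget M ℓ x (x.take m) then x.take (Nat.find h) else x

lemma exm {x : List Bool} (h : ∃ y, ValidTarget M ℓ x y) :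
    ∃ m, ValidTarget M ℓ x (x.take m) := by
  obtain ⟨y, hy⟩ := h
  exact ⟨y.length, by rwa [← List.prefix_iff_eq_take.mp hy.1]⟩

lemma wfT_valid {x : List Bool} (h : ∃ y, ValidTarget M ℓ x y) :
    ValidTarget M ℓ x (wfT M ℓ x) := by
  rw [wfT, dif_pos (exm M ℓ h)]
  exact Nat.find_spec (exm M ℓ h)

lemma wfT_min {x : List Bool} (h : ∃ y, ValidTarget M ℓ x y) {y : List Bool}
    (hyx : y <+: x) (hlt : y.length < (wfT M ℓ x).length) : ¬ ValidTarget M ℓ x y := by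
  have hm := exm M ℓ h
  rw [wfT, dif_pos hm, List.length_take] at hlt
  intro hv
  exact Nat.find_min hm (lt_of_lt_of_le hlt (min_le_left _ _))
    (by rwa [← List.prefix_iff_eq_take.mp hyx])

lemma mergeAux {x x' u : List Bool} (hx : ∃ y, ValidTarget M ℓ x y)
    (hx' : ∃ y, ValidTarget M ℓ x' y)
    (hu : u <+: x) (hu' : u <+: x') (hwx : wfT M ℓ x <+: u) (hwx' : wfT M ℓ x' <+: u)
    (heq : stateAt M ℓ x u = stateAt M ℓ x' u)
    (hle : (wfT M ℓ x).length ≤ (wfT M ℓ x').length) : wfT M ℓ x = wfT M ℓ x' := by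
  have hnlt : ¬ (wfT M ℓ x).length < (wfT M ℓ x').length := by
    intro hltl
    exact wfT_min M ℓ hx' (hwx.trans hu') hltl
      ⟨hwx.trans hu', by
        rw [← stateAt_agree M ℓ hu hu' heq hwx]
        exact (wfT_valid M ℓ hx).2⟩
  have hlen : (wfT M ℓ x).length = (wfT M ℓ x').length := by omega
  calc wfT M ℓ x = u.take (wfT M ℓ x).length := List.prefix_iff_eq_take.mp hwx
    _ = u.take (wfT M ℓ x').length := by rw [hlen]
    _ = wfT M ℓ x' := (List.prefix_iff_eq_take.mp hwx').symm

lemma mergeT {x x' u : List Bool} (hx : ∃ y, ValidTarget M ℓ x y)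
    (hx' : ∃ y, ValidTarget M ℓ x' y)
    (hu : u <+: x) (hu' : u <+: x') (hwx : wfT M ℓ x <+: u) (hwx' : wfT M ℓ x' <+: u)
    (heq : stateAt M ℓ x u = stateAt M ℓ x' u) :
    wfT M ℓ x = wfT M ℓ x' ∧ stateAt M ℓ x (wfT M ℓ x) = stateAt M ℓ x' (wfT M ℓ x) := by
  have key : wfT M ℓ x = wfT M ℓ x' := by
    rcases le_total (wfT M ℓ x).length (wfT M ℓ x').length with hle | hle
    · exact mergeAux M ℓ hx hx' hu hu' hwx hwx' heq hle
    · exact (mergeAux M ℓ hx' hx hu' hu hwx' hwx heq.symm hle).symm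
  exact ⟨key, stateAt_agree M ℓ hu hu' heq hwx⟩

variable (X : Set (List Bool))

def SrcS (y : List Bool) (q : Fin M.k) : Set (List Bool) :=
  {x | x ∈ X ∧ wfT M ℓ x = y ∧ stateAt M ℓ x y = q}

noncomputable def ForbP (y : List Bool) : Finset (ℕ × Fin M.k) :=
  ((Finset.range y.length) ×ˢ (Finset.univ : Finset (Fin M.k))).filter
    fun p => ∃ x ∈ SrcS M ℓ X (y.take p.1) p.2, y <+: x

noncomputable def col (y : List Bool) (q : Fin M.k) : Fin M.k :=
  let B : Finset (Fin M.k) :=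
    ((ForbP M ℓ X y).attach.image fun p => col (y.take p.1.1) p.1.2) ∪
    ((Finset.univ.filter fun q' => q' < q ∧ (SrcS M ℓ X y q').Nonempty).attach.image
      fun p => col y p.1)
  if h : (Finset.univ \ B).Nonempty then (Finset.univ \ B).min' h else q
termination_by y.length * M.k + q.val
decreasing_by
  · have hp := p.2
    simp only [ForbP, Finset.mem_filter, Finset.mem_product, Finset.mem_range] at hp
    have h1 : p.1.1 < y.length := hp.1.1
    have h2 : (p.1.2 : ℕ) < M.k := p.1.2.isLt
    simp only [List.length_take]
    rw [show min p.1.1 y.length = p.1.1 by omega]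
    calc p.1.1 * M.k + (p.1.2 : ℕ) < (p.1.1 + 1) * M.k := by
          have : (p.1.1 + 1) * M.k = p.1.1 * M.k + M.k := by ring
          omega
      _ ≤ y.length * M.k := Nat.mul_le_mul_right _ (by omega)
      _ ≤ y.length * M.k + (q : ℕ) := Nat.le_add_right _ _
  · have hp := p.2
    simp only [Finset.mem_filter] at hp
    have : (p.1 : ℕ) < (q : ℕ) := hp.2.1
    omega

noncomputable def Bset (y : List Bool) (q : Fin M.k) : Finset (Fin M.k) :=
  ((ForbP M ℓ X y).attach.image fun p => col M ℓ X (y.take p.1.1) p.1.2) ∪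
  ((Finset.univ.filter fun q' => q' < q ∧ (SrcS M ℓ X y q').Nonempty).attach.image
    fun p => col M ℓ X y p.1)

lemma col_def (y : List Bool) (q : Fin M.k) :
    col M ℓ X y q = if h : (Finset.univ \ Bset M ℓ X y q).Nonempty
      then (Finset.univ \ Bset M ℓ X y q).min' h else q := by
  rw [col]
  rfl

noncomputable def SFin (y : List Bool) : Finset (Fin M.k) :=
  Finset.univ.filter fun q' => (SrcS M ℓ X y q').Nonempty

lemma forb_card (hX : ∀ x ∈ X, ∃ y, ValidTarget M ℓ x y) (y : List Bool) :
    (ForbP M ℓ X y).card ≤ M.k - (SFin M ℓ X y).card := by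
  classical
  have hmain : (ForbP M ℓ X y).card ≤ (Finset.univ \ SFin M ℓ X y).card := by
    set f : ℕ × Fin M.k → Fin M.k := fun p =>
      if h : ∃ x, x ∈ SrcS M ℓ X (y.take p.1) p.2 ∧ y <+: x
      then stateAt M ℓ h.choose y else M.q0 with hf
    have hwit : ∀ p ∈ ForbP M ℓ X y,
        ∃ x, (x ∈ SrcS M ℓ X (y.take p.1) p.2 ∧ y <+: x) ∧
          p.1 < y.length ∧ f p = stateAt M ℓ x y := by
      intro p hp
      simp only [ForbP, Finset.mem_filter, Finset.mem_product, Finset.mem_range] at hp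
      obtain ⟨⟨hj, -⟩, hex⟩ := hp
      have hex' : ∃ x, x ∈ SrcS M ℓ X (y.take p.1) p.2 ∧ y <+: x := by
        obtain ⟨x, hx1, hx2⟩ := hex; exact ⟨x, hx1, hx2⟩
      exact ⟨hex'.choose, hex'.choose_spec, hj, by rw [hf]; simp only [dif_pos hex']⟩
    -- key: witnesses through y with equal state merge
    have hkey : ∀ (x₁ x₂ : List Bool), x₁ ∈ X → x₂ ∈ X → y <+: x₁ → y <+: x₂ →
        wfT M ℓ x₁ <+: y → wfT M ℓ x₂ <+: y →
        stateAt M ℓ x₁ y = stateAt M ℓ x₂ y →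
        wfT M ℓ x₁ = wfT M ℓ x₂ ∧
          stateAt M ℓ x₁ (wfT M ℓ x₁) = stateAt M ℓ x₂ (wfT M ℓ x₁) := by
      intro x₁ x₂ hx₁ hx₂ h1 h2 h3 h4 h5
      exact mergeT M ℓ (hX _ hx₁) (hX _ hx₂) h1 h2 h3 h4 h5
    apply Finset.card_le_card_of_injOn f
    · intro p hp
      obtain ⟨x₀, ⟨hx₀s, hx₀y⟩, hj, hfp⟩ := hwit p hp
      obtain ⟨hx₀X, hx₀w, hx₀q⟩ := hx₀s
      rw [Finset.mem_coe, Finset.mem_sdiff]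
      refine ⟨Finset.mem_univ _, fun hmem => ?_⟩
      simp only [SFin, Finset.mem_filter] at hmem
      obtain ⟨x'', hx''X, hx''w, hx''q⟩ := hmem.2
      have hwx₀ : wfT M ℓ x₀ <+: y := by rw [hx₀w]; exact List.take_prefix _ _
      have hwx'' : wfT M ℓ x'' <+: y := by rw [hx''w]
      have hy'' : y <+: x'' := by rw [← hx''w]; exact (wfT_valid M ℓ (hX _ hx''X)).1
      have heqs : stateAt M ℓ x₀ y = stateAt M ℓ x'' y := by rw [hx''q, hfp]
      have := (hkey x₀ x'' hx₀X hx''X hx₀y hy'' hwx₀ hwx'' heqs).1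
      rw [hx₀w, hx''w] at this
      have := congrArg List.length this
      simp only [List.length_take] at this
      omega
    · intro p₁ hp₁ p₂ hp₂ hfeq
      simp only [Finset.mem_coe] at hp₁ hp₂
      obtain ⟨x₁, ⟨hx₁s, hx₁y⟩, hj₁, hf₁⟩ := hwit p₁ hp₁
      obtain ⟨x₂, ⟨hx₂s, hx₂y⟩, hj₂, hf₂⟩ := hwit p₂ hp₂
      obtain ⟨hx₁X, hx₁w, hx₁q⟩ := hx₁s
      obtain ⟨hx₂X, hx₂w, hx₂q⟩ := hx₂s
      have hwx₁ : wfT M ℓ x₁ <+: y := by rw [hx₁w]; exact List.take_prefix _ _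
      have hwx₂ : wfT M ℓ x₂ <+: y := by rw [hx₂w]; exact List.take_prefix _ _
      have heqs : stateAt M ℓ x₁ y = stateAt M ℓ x₂ y := by rw [← hf₁, ← hf₂, hfeq]
      obtain ⟨hweq, hseq⟩ := hkey x₁ x₂ hx₁X hx₂X hx₁y hx₂y hwx₁ hwx₂ heqs
      have hjeq : p₁.1 = p₂.1 := by
        have := congrArg List.length (hx₁w ▸ hx₂w ▸ hweq)
        simp only [List.length_take] at this
        omega
      have hqeq : p₁.2 = p₂.2 := by
        rw [← hx₁q, ← hx₂q]
        have e1 : stateAt M ℓ x₁ (y.take p₁.1) = stateAt M ℓ x₂ (y.take p₁.1) := by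
          rw [← hx₁w]; exact hseq
        rw [e1, hjeq]
      exact Prod.ext hjeq hqeq
  rwa [Finset.card_sdiff_of_subset (Finset.subset_univ _), Finset.card_univ, Fintype.card_fin] at hmain

lemma avail_nonempty (hX : ∀ x ∈ X, ∃ y, ValidTarget M ℓ x y) (y : List Bool) (q : Fin M.k)
    (hq : (SrcS M ℓ X y q).Nonempty) : (Finset.univ \ Bset M ℓ X y q).Nonempty := by
  classical
  have hqS : q ∈ SFin M ℓ X y := by
    simp only [SFin, Finset.mem_filter]; exact ⟨Finset.mem_univ _, hq⟩
  have hspos : 0 < (SFin M ℓ X y).card := Finset.card_pos.mpr ⟨q, hqS⟩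
  have hsle : (SFin M ℓ X y).card ≤ M.k := by
    simpa using Finset.card_le_univ (SFin M ℓ X y)
  have hb1 : (((ForbP M ℓ X y).attach.image
      fun p => col M ℓ X (y.take p.1.1) p.1.2)).card ≤ M.k - (SFin M ℓ X y).card := by
    calc _ ≤ (ForbP M ℓ X y).attach.card := Finset.card_image_le
      _ = (ForbP M ℓ X y).card := Finset.card_attach
      _ ≤ _ := forb_card M ℓ X hX y
  have hb2 : (((Finset.univ.filter fun q' => q' < q ∧ (SrcS M ℓ X y q').Nonempty).attach.image
      fun p => col M ℓ X y p.1)).card ≤ (SFin M ℓ X y).card - 1 := by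
    have hsub : (Finset.univ.filter fun q' => q' < q ∧ (SrcS M ℓ X y q').Nonempty)
        ⊆ (SFin M ℓ X y).erase q := by
      intro q' hq'
      simp only [Finset.mem_filter] at hq'
      refine Finset.mem_erase.mpr ⟨ne_of_lt hq'.2.1, ?_⟩
      simp only [SFin, Finset.mem_filter]
      exact ⟨Finset.mem_univ _, hq'.2.2⟩
    calc _ ≤ (Finset.univ.filter fun q' => q' < q ∧ (SrcS M ℓ X y q').Nonempty).attach.card :=
          Finset.card_image_le
      _ = _ := Finset.card_attach
      _ ≤ ((SFin M ℓ X y).erase q).card := Finset.card_le_card hsub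
      _ = (SFin M ℓ X y).card - 1 := Finset.card_erase_of_mem hqS
  have hbcard : (Bset M ℓ X y q).card < M.k := by
    have := Finset.card_union_le
      (((ForbP M ℓ X y).attach.image fun p => col M ℓ X (y.take p.1.1) p.1.2))
      (((Finset.univ.filter fun q' => q' < q ∧ (SrcS M ℓ X y q').Nonempty).attach.image
        fun p => col M ℓ X y p.1))
    have hk : 0 < M.k := q.pos
    calc (Bset M ℓ X y q).card ≤ _ := this
      _ < M.k := by omega
  rw [← Finset.card_pos, Finset.card_sdiff_of_subset (Finset.subset_univ _), Finset.card_univ,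
    Fintype.card_fin]
  omega

lemma col_not_mem (hX : ∀ x ∈ X, ∃ y, ValidTarget M ℓ x y) (y : List Bool) (q : Fin M.k)
    (hq : (SrcS M ℓ X y q).Nonempty) : col M ℓ X y q ∉ Bset M ℓ X y q := by
  have h := avail_nonempty M ℓ X hX y q hq
  rw [col_def, dif_pos h]
  exact (Finset.mem_sdiff.mp (Finset.min'_mem _ h)).2

lemma col_ne_lower (hX : ∀ x ∈ X, ∃ y, ValidTarget M ℓ x y) {y : List Bool} {j : ℕ}
    {q' q : Fin M.k} (hj : j < y.length)
    (hth : ∃ x ∈ SrcS M ℓ X (y.take j) q', y <+: x)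
    (hq : (SrcS M ℓ X y q).Nonempty) :
    col M ℓ X (y.take j) q' ≠ col M ℓ X y q := by
  intro h
  apply col_not_mem M ℓ X hX y q hq
  rw [← h]
  apply Finset.mem_union_left
  have hmem : (j, q') ∈ ForbP M ℓ X y := by
    simp only [ForbP, Finset.mem_filter, Finset.mem_product, Finset.mem_range]
    exact ⟨⟨hj, Finset.mem_univ _⟩, hth⟩
  exact Finset.mem_image.mpr ⟨⟨(j, q'), hmem⟩, Finset.mem_attach _ _, rfl⟩

lemma col_ne_same (hX : ∀ x ∈ X, ∃ y, ValidTarget M ℓ x y) {y : List Bool} {q q' : Fin M.k}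
    (hlt : q < q') (hq : (SrcS M ℓ X y q).Nonempty) (hq' : (SrcS M ℓ X y q').Nonempty) :
    col M ℓ X y q ≠ col M ℓ X y q' := by
  intro h
  apply col_not_mem M ℓ X hX y q' hq'
  rw [← h]
  apply Finset.mem_union_right
  have hmem : q ∈ Finset.univ.filter fun r => r < q' ∧ (SrcS M ℓ X y r).Nonempty := by
    simp only [Finset.mem_filter]
    exact ⟨Finset.mem_univ _, hlt, hq⟩
  exact Finset.mem_image.mpr ⟨⟨q, hmem⟩, Finset.mem_attach _ _, rfl⟩

end Aux

set_option maxHeartbeats 1000000 in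
/-- (a) Two upward runs that agree at a common node agree on the remaining
common path; (b) consequently, whenever every node of `X` has a valid target,
there is a guidance system with at most `|Q|` colors inducing a function that
maps each `x ∈ X` to some valid target. -/
theorem stmt17 {A : Type*} (M : DFA' A) (ℓ : List Bool → A) :
    (∀ x x' z, z <+: x → z <+: x' → stateAt M ℓ x z = stateAt M ℓ x' z →
      ∀ w, w <+: z → stateAt M ℓ x w = stateAt M ℓ x' w) ∧
    (∀ X : Set (List Bool), (∀ x ∈ X, ∃ y, ValidTarget M ℓ x y) →
      ∃ (wf : List Bool → List Bool) (GS : Set BGuide) (c : BGuide → ℕ),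
        (∀ x ∈ X, ValidTarget M ℓ x (wf x)) ∧
        (∀ x ∈ X, ∃ π ∈ GS, x ∈ π.sources ∧ π.target = wf x) ∧
        (∀ π ∈ GS, c π < M.k) ∧
        (∀ π ∈ GS, ∀ π' ∈ GS, π ≠ π' → BConflict π π' → c π ≠ c π')) := by
  constructor
  · intro x x' z hzx hzx' h w hw
    exact stateAt_agree M ℓ hzx hzx' h hw
  · intro X hX
    classical
    set cf : BGuide → ℕ := fun π =>
      if h : ∃ q, π.sources = SrcS M ℓ X π.target q
      then (col M ℓ X π.target h.choose).val else 0 with hcf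
    have ceval : ∀ (y : List Bool) (q : Fin M.k) (hq : (SrcS M ℓ X y q).Nonempty),
        cf (⟨SrcS M ℓ X y q, hq, y⟩ : BGuide) = (col M ℓ X y q).val := by
      intro y q hq
      have h : ∃ q', (⟨SrcS M ℓ X y q, hq, y⟩ : BGuide).sources
          = SrcS M ℓ X (⟨SrcS M ℓ X y q, hq, y⟩ : BGuide).target q' := ⟨q, rfl⟩
      rw [hcf]
      simp only [dif_pos h]
      obtain ⟨x, hxX, hxw, hxq⟩ := hq
      have hx' : x ∈ SrcS M ℓ X y h.choose := by
        have hc : SrcS M ℓ X y q = SrcS M ℓ X y h.choose := h.choose_spec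
        rw [← hc]; exact ⟨hxX, hxw, hxq⟩
      have : h.choose = q := by rw [← hx'.2.2, hxq]
      rw [this]
    refine ⟨wfT M ℓ,
      {π | ∃ y q, ∃ h : (SrcS M ℓ X y q).Nonempty, π = ⟨SrcS M ℓ X y q, h, y⟩},
      cf, ?_, ?_, ?_, ?_⟩
    · exact fun x hx => wfT_valid M ℓ (hX x hx)
    · intro x hx
      exact ⟨⟨SrcS M ℓ X (wfT M ℓ x) (stateAt M ℓ x (wfT M ℓ x)), ⟨x, hx, rfl, rfl⟩, wfT M ℓ x⟩,
        ⟨_, _, _, rfl⟩, ⟨hx, rfl, rfl⟩, rfl⟩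
    · rintro π ⟨y, q, hq, rfl⟩
      rw [ceval y q hq]
      exact (col M ℓ X y q).isLt
    · rintro π ⟨y, q, hq, rfl⟩ π' ⟨y', q', hq', rfl⟩ hne hconf
      rw [ceval y q hq, ceval y' q' hq']
      obtain ⟨w, hw, hw'⟩ := hconf
      obtain ⟨s, hs, hps0⟩ := hw
      obtain ⟨s', hs', hps0'⟩ := hw'
      have hps : onPath s y w := hps0
      have hps' : onPath s' y' w := hps0'
      have hys : y <+: s := by
        rw [← hs.2.1]; exact (wfT_valid M ℓ (hX s hs.1)).1
      have hys' : y' <+: s' := by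
        rw [← hs'.2.1]; exact (wfT_valid M ℓ (hX s' hs'.1)).1
      have hyw : y <+: w := by
        have := hps.1; rwa [lcp_of_prefix hys] at this
      have hyw' : y' <+: w := by
        have := hps'.1; rwa [lcp_of_prefix hys'] at this
      rcases lt_trichotomy y.length y'.length with hlt | hleq | hgt
      · have hpre : y <+: y' := List.prefix_of_prefix_length_le hyw hyw' (le_of_lt hlt)
        have hws : w <+: s := by
          rcases hps.2 with h | h
          · exact h
          · exfalso; have := (hyw'.trans h).length_le; omega
        have htake : y'.take y.length = y := (List.prefix_iff_eq_take.mp hpre).symm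
        have hne2 := col_ne_lower M ℓ X hX (y := y') (j := y.length) (q' := q) (q := q') hlt
          (by rw [htake]; exact ⟨s, hs, hyw'.trans hws⟩) hq'
        rw [htake] at hne2
        exact fun hv => hne2 (Fin.val_injective hv)
      · have hyy : y = y' := by
          rw [List.prefix_iff_eq_take.mp hyw, List.prefix_iff_eq_take.mp hyw', hleq]
        subst hyy
        have hqq : q ≠ q' := by rintro rfl; exact hne rfl
        rcases hqq.lt_or_gt with h | h
        · exact fun hv => (col_ne_same M ℓ X hX h hq hq') (Fin.val_injective hv)
        · exact fun hv => (col_ne_same M ℓ X hX h hq' hq) (Fin.val_injective hv).symm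
      · have hpre : y' <+: y := List.prefix_of_prefix_length_le hyw' hyw (le_of_lt hgt)
        have hws' : w <+: s' := by
          rcases hps'.2 with h | h
          · exact h
          · exfalso; have := (hyw.trans h).length_le; omega
        have htake : y.take y'.length = y' := (List.prefix_iff_eq_take.mp hpre).symm
        have hne2 := col_ne_lower M ℓ X hX (y := y) (j := y'.length) (q' := q') (q := q) hgt
          (by rw [htake]; exact ⟨s', hs', hyw.trans hws'⟩) hq
        rw [htake] at hne2
        exact fun hv => hne2 (Fin.val_injective hv).symm
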